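/- Let X, Y be disjoint sets of distinct reals, N = |X| + |Y|, x ∈ X, X' = X \ {x}, and x* a real distinct from all values in X' ∪ Y, X* = {x*} ∪ X'. Suppose (rank(x, X∪Y) - (N+1)/2)(rank(x*, X*∪Y) - (N+1)/2) ≥ 0 and |rank(x, X∪Y) - (N+1)/2| ≥ |rank(x*, X*∪Y) - (N+1)/2|. Then T(X,Y) ≥ T(X*,Y), where T is the Ansari-Bradley statistic. -/

import Mathlib

open Finset

/-- rank of `x` in `Z`: number of elements of `Z` less than or equal to `x`. -/
noncomputable def rk (x : ℝ) (Z : Finset ℝ) : ℕ := (Z.filter (fun z => z ≤ x)).card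

/-- Ansari-Bradley test statistic. -/
noncomputable def ABT (A B : Finset ℝ) : ℝ :=
  ∑ a ∈ A, |(rk a (A ∪ B) : ℝ) - (((A ∪ B).card : ℝ) + 1) / 2|

lemma rk_insert (u a : ℝ) (Z : Finset ℝ) (hu : u ∉ Z) :
    (rk a (insert u Z) : ℝ) = (rk a Z : ℝ) + (if u ≤ a then 1 else 0) := by
  unfold rk
  rw [filter_insert]
  by_cases h : u ≤ a
  · rw [if_pos h, if_pos h, card_insert_of_notMem (fun hm => hu (mem_filter.mp hm).1)]
    push_cast; ring
  · rw [if_neg h, if_neg h, add_zero]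

lemma rk_mono (Z : Finset ℝ) {x y : ℝ} (h : x ≤ y) : rk x Z ≤ rk y Z := by
  apply card_le_card
  intro z hz
  rw [mem_filter] at hz ⊢
  exact ⟨hz.1, hz.2.trans h⟩

lemma sum_ind (Z : Finset ℝ) (u : ℝ) (hu : u ∉ Z) :
    ∑ a ∈ Z, (if u ≤ a then (1:ℝ) else 0) = (Z.card : ℝ) - rk u Z := by
  rw [Finset.sum_boole]
  have h : Z.filter (fun a => u ≤ a) = Z.filter (fun a => ¬ a ≤ u) := by
    apply filter_congr
    intro a ha
    constructor
    · intro h1 h2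
      exact hu (by rwa [le_antisymm h2 h1] at ha)
    · intro h1; exact le_of_not_ge h1
  have h2 := Finset.card_filter_add_card_filter_not (s := Z) (p := fun a => a ≤ u)
  rw [h]
  unfold rk
  push_cast [← h2]
  ring

lemma key_le (Z : Finset ℝ) {x xs : ℝ} (hx : x ∉ Z) (hxs : xs ∉ Z) (h : x ≤ xs) :
    ∑ a ∈ Z, |(if x ≤ a then (1:ℝ) else 0) - (if xs ≤ a then 1 else 0)|
      = (rk xs Z : ℝ) - rk x Z := by
  have h1 : ∀ a ∈ Z, |(if x ≤ a then (1:ℝ) else 0) - (if xs ≤ a then 1 else 0)|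
      = (if x ≤ a then (1:ℝ) else 0) - (if xs ≤ a then 1 else 0) := by
    intro a _
    apply abs_of_nonneg
    by_cases h2 : xs ≤ a
    · simp [h2, le_trans h h2]
    · by_cases h3 : x ≤ a <;> simp [h2, h3]
  rw [Finset.sum_congr rfl h1, Finset.sum_sub_distrib, sum_ind Z x hx, sum_ind Z xs hxs]
  ring

lemma key (Z : Finset ℝ) {x xs : ℝ} (hx : x ∉ Z) (hxs : xs ∉ Z) :
    ∑ a ∈ Z, |(if x ≤ a then (1:ℝ) else 0) - (if xs ≤ a then 1 else 0)|
      = |(rk x Z : ℝ) - rk xs Z| := by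
  rcases le_total x xs with h | h
  · rw [key_le Z hx hxs h, abs_sub_comm, abs_of_nonneg]
    have := rk_mono Z h
    have : (rk x Z : ℝ) ≤ rk xs Z := by exact_mod_cast this
    linarith
  · have hswap : ∀ a ∈ Z, |(if x ≤ a then (1:ℝ) else 0) - (if xs ≤ a then 1 else 0)|
        = |(if xs ≤ a then (1:ℝ) else 0) - (if x ≤ a then 1 else 0)| := by
      intro a _; rw [abs_sub_comm]
    rw [Finset.sum_congr rfl hswap, key_le Z hxs hx h, abs_of_nonneg]
    have := rk_mono Z h
    have : (rk xs Z : ℝ) ≤ rk x Z := by exact_mod_cast this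
    linarith

lemma abs_sub_abs_of_mul_nonneg {u v : ℝ} (hs : u * v ≥ 0) (ha : |u| ≥ |v|) :
    |u| - |v| = |u - v| := by
  rcases abs_cases u with ⟨e1, s1⟩ | ⟨e1, s1⟩ <;>
    rcases abs_cases v with ⟨e2, s2⟩ | ⟨e2, s2⟩ <;>
    rcases abs_cases (u - v) with ⟨e3, s3⟩ | ⟨e3, s3⟩ <;>
    rw [e1, e2] at ha <;> rw [e1, e2, e3] <;> nlinarith [hs, ha]

theorem stmt4 (X Y : Finset ℝ) (x xs : ℝ) (hd : Disjoint X Y) (hx : x ∈ X)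
    (X' Xs : Finset ℝ) (hX' : X' = X.erase x) (hxs : xs ∉ X' ∪ Y)
    (hXs : Xs = insert xs X') (N : ℕ) (hN : N = X.card + Y.card)
    (hsign : ((rk x (X ∪ Y) : ℝ) - ((N : ℝ) + 1) / 2)
        * ((rk xs (Xs ∪ Y) : ℝ) - ((N : ℝ) + 1) / 2) ≥ 0)
    (habs : |(rk x (X ∪ Y) : ℝ) - ((N : ℝ) + 1) / 2|
        ≥ |(rk xs (Xs ∪ Y) : ℝ) - ((N : ℝ) + 1) / 2|) :
    ABT X Y ≥ ABT Xs Y := by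
  set Z : Finset ℝ := X' ∪ Y with hZ
  set c : ℝ := ((N : ℝ) + 1) / 2 with hc
  have hxX' : x ∉ X' := by rw [hX']; exact notMem_erase x X
  have hxY : x ∉ Y := disjoint_left.mp hd hx
  have hxZ : x ∉ Z := by
    rw [hZ, mem_union]; push_neg; exact ⟨hxX', hxY⟩
  have hxsZ : xs ∉ Z := hxs
  have hxsX' : xs ∉ X' := fun h => hxsZ (by rw [hZ]; exact mem_union_left _ h)
  have hXeq : X = insert x X' := by rw [hX', insert_erase hx]
  have hXY : X ∪ Y = insert x Z := by rw [hXeq, hZ, insert_union]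
  have hXsY : Xs ∪ Y = insert xs Z := by rw [hXs, hZ, insert_union]
  -- cardinalities
  have hdisj' : Disjoint X' Y := by
    rw [hX']; exact disjoint_of_subset_left (erase_subset x X) hd
  have hZcard : Z.card + 1 = N := by
    have h1 := card_erase_add_one hx
    rw [hZ, card_union_of_disjoint hdisj', hN, hX']
    omega
  have hcard1 : (X ∪ Y).card = N := by
    rw [hXY, card_insert_of_notMem hxZ, hZcard]
  have hcard2 : (Xs ∪ Y).card = N := by
    rw [hXsY, card_insert_of_notMem hxsZ, hZcard]
  -- rank decompositions
  have hrkX : ∀ a : ℝ, (rk a (X ∪ Y) : ℝ) = (rk a Z : ℝ) + (if x ≤ a then 1 else 0) := by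
    intro a; rw [hXY, rk_insert x a Z hxZ]
  have hrkXs : ∀ a : ℝ, (rk a (Xs ∪ Y) : ℝ) = (rk a Z : ℝ) + (if xs ≤ a then 1 else 0) := by
    intro a; rw [hXsY, rk_insert xs a Z hxsZ]
  -- ABT decompositions
  have hABX : ABT X Y = |(rk x (X ∪ Y) : ℝ) - c| + ∑ a ∈ X', |(rk a (X ∪ Y) : ℝ) - c| := by
    unfold ABT
    rw [hcard1, ← hc, hXeq, sum_insert hxX']
  have hABXs : ABT Xs Y
      = |(rk xs (Xs ∪ Y) : ℝ) - c| + ∑ a ∈ X', |(rk a (Xs ∪ Y) : ℝ) - c| := by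
    unfold ABT
    rw [hcard2, ← hc, hXs, sum_insert hxsX']
  -- step 1 : same-side fact
  have hstep1 : |(rk x (X ∪ Y) : ℝ) - c| - |(rk xs (Xs ∪ Y) : ℝ) - c|
      = |(rk x (X ∪ Y) : ℝ) - (rk xs (Xs ∪ Y) : ℝ)| := by
    have h := abs_sub_abs_of_mul_nonneg hsign habs
    rw [h]
    congr 1
    ring
  -- step 3 : total rank perturbation bound
  have hsum_e : ∑ a ∈ X', |(if x ≤ a then (1:ℝ) else 0) - (if xs ≤ a then 1 else 0)|
      ≤ |(rk x (X ∪ Y) : ℝ) - (rk xs (Xs ∪ Y) : ℝ)| := by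
    have hsub : X' ⊆ Z := by rw [hZ]; exact subset_union_left
    have h1 : ∑ a ∈ X', |(if x ≤ a then (1:ℝ) else 0) - (if xs ≤ a then 1 else 0)|
        ≤ ∑ a ∈ Z, |(if x ≤ a then (1:ℝ) else 0) - (if xs ≤ a then 1 else 0)| :=
      sum_le_sum_of_subset_of_nonneg hsub (fun i _ _ => abs_nonneg _)
    have h2 := key Z hxZ hxsZ
    have h3 : (rk x (X ∪ Y) : ℝ) - (rk xs (Xs ∪ Y) : ℝ) = (rk x Z : ℝ) - rk xs Z := by
      rw [hrkX x, hrkXs xs]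
      simp
    rw [h3, ← h2]
    exact h1
  -- step 2 : per-term perturbation bound
  have hterm : ∀ a ∈ X', |(rk a (Xs ∪ Y) : ℝ) - c|
      ≤ |(rk a (X ∪ Y) : ℝ) - c|
        + |(if x ≤ a then (1:ℝ) else 0) - (if xs ≤ a then 1 else 0)| := by
    intro a _
    have h4 : |(if x ≤ a then (1:ℝ) else 0) - (if xs ≤ a then 1 else 0)|
        = |(rk a (Xs ∪ Y) : ℝ) - (rk a (X ∪ Y) : ℝ)| := by
      rw [hrkX a, hrkXs a]
      rw [show ((rk a Z : ℝ) + (if xs ≤ a then (1:ℝ) else 0))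
          - ((rk a Z : ℝ) + (if x ≤ a then (1:ℝ) else 0))
          = (if xs ≤ a then (1:ℝ) else 0) - (if x ≤ a then (1:ℝ) else 0) from by ring,
        abs_sub_comm]
    have h5 := abs_sub_le ((rk a (Xs ∪ Y) : ℝ)) ((rk a (X ∪ Y) : ℝ)) c
    rw [h4]
    linarith
  have hsumle : ∑ a ∈ X', |(rk a (Xs ∪ Y) : ℝ) - c|
      ≤ ∑ a ∈ X', (|(rk a (X ∪ Y) : ℝ) - c|
        + |(if x ≤ a then (1:ℝ) else 0) - (if xs ≤ a then 1 else 0)|) :=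
    sum_le_sum hterm
  rw [Finset.sum_add_distrib] at hsumle
  rw [ge_iff_le, hABX, hABXs]
  linarith
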